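/- Let α, β ∈ ℝ with α > 1, β > 1 and α ≠ β. Then there exists a positive path A : [0,1] → Sp(2) such that trace(A(t)) > 2 for all t ∈ [0,1] (so each A(t) has two distinct real positive eigenvalues), the function t ↦ trace(A(t)) is strictly monotone, A(0) has eigenvalues {α, 1/α}, and A(1) has eigenvalues {β, 1/β}. -/

import Mathlib

open Matrix Set

attribute [local instance] Matrix.normedAddCommGroup Matrix.normedSpace

/-- The standard complex structure on `ℝ²`. -/
def J2 : Matrix (Fin 2) (Fin 2) ℝ := !![0, -1; 1, 0]

/-- A positive path in `Sp(2)` on the parameter set `s`. -/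
def IsPosPath2 (s : Set ℝ) (A : ℝ → Matrix (Fin 2) (Fin 2) ℝ) : Prop :=
  ∀ t ∈ s, (A t)ᵀ * J2 * A t = J2 ∧
    ∃ P : Matrix (Fin 2) (Fin 2) ℝ, P.IsSymm ∧ P.PosDef ∧
      HasDerivWithinAt A (J2 * P * A t) s t

lemma posdef_fin_two (p q r : ℝ) (hp : 0 < p) (hd : 0 < p * r - q * q) :
    (!![p, q; q, r]).PosDef := by
  constructor
  · ext i j
    fin_cases i <;> fin_cases j <;> simp [Matrix.conjTranspose_apply]
  · intro x hx
    have hr : 0 < r := by nlinarith [sq_nonneg q]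
    have hx01 : x 0 ≠ 0 ∨ x 1 ≠ 0 := by
      by_contra h
      push_neg at h
      exact hx (by ext i; fin_cases i <;> simp [h.1, h.2])
    have hQ : (x.sum fun i xi => x.sum fun j xj => star xi * (!![p, q; q, r] : Matrix (Fin 2) (Fin 2) ℝ) i j * xj) =
        p * x 0 * x 0 + q * x 0 * x 1 + q * x 1 * x 0 + r * x 1 * x 1 := by
      simp [Finsupp.sum_fintype, Fin.sum_univ_two]
      ring
    rw [hQ]
    rcases hx01 with h | h
    · nlinarith [sq_nonneg (q * x 0 + r * x 1), mul_pos hd (mul_self_pos.mpr h)]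
    · nlinarith [sq_nonneg (p * x 0 + q * x 1), mul_pos hd (mul_self_pos.mpr h)]

lemma matderiv_fin_two (f : ℝ → Matrix (Fin 2) (Fin 2) ℝ) (f' : Matrix (Fin 2) (Fin 2) ℝ)
    (s : Set ℝ) (t : ℝ)
    (h : ∀ i j, HasDerivWithinAt (fun t => f t i j) (f' i j) s t) :
    HasDerivWithinAt f f' s t := by
  exact hasDerivWithinAt_pi.2 fun i => hasDerivWithinAt_pi.2 (h i)

lemma transpose_fin_two' (a b c d : ℝ) : (!![a, b; c, d])ᵀ = !![a, c; b, d] := by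
  ext i j
  fin_cases i <;> fin_cases j <;> rfl

lemma stmt4_aux (T₀ T₁ : ℝ) (h0 : 2 < T₀) (h1 : 2 < T₁) (hne : T₀ ≠ T₁) :
    ∃ A : ℝ → Matrix (Fin 2) (Fin 2) ℝ, IsPosPath2 (Icc (0 : ℝ) 1) A ∧
      (∀ t ∈ Icc (0 : ℝ) 1, 2 < (A t).trace) ∧
      (StrictMonoOn (fun t => (A t).trace) (Icc (0 : ℝ) 1) ∨
        StrictAntiOn (fun t => (A t).trace) (Icc (0 : ℝ) 1)) ∧
      (A 0).trace = T₀ ∧ (A 1).trace = T₁ := by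
  obtain ⟨L, hLpos, key⟩ : ∃ L : ℝ, 0 < L ∧
      ∀ t ∈ Icc (0 : ℝ) 1, T₁ - T₀ < L * ((1 - t) * T₀ + t * T₁ - 2) := by
    have hm2 : 2 < min T₀ T₁ := lt_min h0 h1
    refine ⟨(|T₁ - T₀| + 1) / (min T₀ T₁ - 2),
      div_pos (by positivity) (by linarith), ?_⟩
    intro t ht
    have h1' := min_le_left T₀ T₁
    have h2' := min_le_right T₀ T₁
    have h3' : ((|T₁ - T₀| + 1) / (min T₀ T₁ - 2)) * (min T₀ T₁ - 2) = |T₁ - T₀| + 1 :=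
      div_mul_cancel₀ _ (by linarith)
    have h4' : (1 - t) * T₀ + t * T₁ - 2 ≥ min T₀ T₁ - 2 := by nlinarith [ht.1, ht.2]
    have h5' : (0 : ℝ) < (|T₁ - T₀| + 1) / (min T₀ T₁ - 2) :=
      div_pos (by positivity) (by linarith)
    have h6' := le_abs_self (T₁ - T₀)
    nlinarith
  have hfm : ∀ t ∈ Icc (0 : ℝ) 1, 2 < (1 - t) * T₀ + t * T₁ := by
    intro t ht
    rcases lt_or_ge t 1 with h | h
    · nlinarith [mul_pos (by linarith : (0:ℝ) < 1 - t) (by linarith : (0:ℝ) < T₀ - 2),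
        mul_nonneg ht.1 (by linarith : (0:ℝ) ≤ T₁ - 2)]
    · have ht1 : t = 1 := le_antisymm ht.2 h
      rw [ht1]
      linarith
  refine ⟨fun t => !![(1 - t) * T₀ + t * T₁ - 1,
      ((1 - t) * T₀ + t * T₁ - 2) * Real.exp (-(L * t));
      Real.exp (L * t), 1], ?_, ?_, ?_, ?_, ?_⟩
  · intro t ht
    have hexp : Real.exp (L * t) * Real.exp (-(L * t)) = 1 := by
      rw [← Real.exp_add]; simp
    constructor
    · rw [show J2 = !![(0:ℝ), -1; 1, 0] from rfl, transpose_fin_two',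
        Matrix.mul_fin_two, Matrix.mul_fin_two]
      ext i j
      fin_cases i <;> fin_cases j <;> simp <;>
        first
        | ring1
        | linear_combination ((1 - t) * T₀ + t * T₁ - 2) * hexp
        | linear_combination (-((1 - t) * T₀ + t * T₁ - 2)) * hexp
    · refine ⟨!![L * Real.exp (L * t), -(L * ((1 - t) * T₀ + t * T₁ - 2));
        -(L * ((1 - t) * T₀ + t * T₁ - 2)),
        Real.exp (-(L * t)) * (L * ((1 - t) * T₀ + t * T₁ - 2) * ((1 - t) * T₀ + t * T₁ - 1)
          - (T₁ - T₀))], ?_, ?_, ?_⟩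
      · ext i j
        fin_cases i <;> fin_cases j <;> simp [Matrix.transpose_apply]
      · apply posdef_fin_two
        · positivity
        · have hk := key t ht
          have hdet : L * Real.exp (L * t) *
              (Real.exp (-(L * t)) * (L * ((1 - t) * T₀ + t * T₁ - 2) *
                ((1 - t) * T₀ + t * T₁ - 1) - (T₁ - T₀))) -
              (-(L * ((1 - t) * T₀ + t * T₁ - 2))) * (-(L * ((1 - t) * T₀ + t * T₁ - 2))) =
              L * (L * ((1 - t) * T₀ + t * T₁ - 2) - (T₁ - T₀)) := by
            linear_combination (L * (L * ((1 - t) * T₀ + t * T₁ - 2) *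
              ((1 - t) * T₀ + t * T₁ - 1) - (T₁ - T₀))) * hexp
          rw [hdet]
          apply mul_pos hLpos
          linarith
      · have hgoal : J2 * !![L * Real.exp (L * t), -(L * ((1 - t) * T₀ + t * T₁ - 2));
            -(L * ((1 - t) * T₀ + t * T₁ - 2)),
            Real.exp (-(L * t)) * (L * ((1 - t) * T₀ + t * T₁ - 2) *
              ((1 - t) * T₀ + t * T₁ - 1) - (T₁ - T₀))] *
            !![(1 - t) * T₀ + t * T₁ - 1,
              ((1 - t) * T₀ + t * T₁ - 2) * Real.exp (-(L * t));
              Real.exp (L * t), 1] =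
            !![T₁ - T₀,
              ((T₁ - T₀) - L * ((1 - t) * T₀ + t * T₁ - 2)) * Real.exp (-(L * t));
              L * Real.exp (L * t), 0] := by
          rw [show J2 = !![(0:ℝ), -1; 1, 0] from rfl,
            Matrix.mul_fin_two, Matrix.mul_fin_two]
          ext i j
          fin_cases i <;> fin_cases j <;> simp <;>
            first
            | ring1
            | linear_combination (-(L * ((1 - t) * T₀ + t * T₁ - 2) *
                ((1 - t) * T₀ + t * T₁ - 1) - (T₁ - T₀))) * hexp
            | linear_combination (L * ((1 - t) * T₀ + t * T₁ - 2) *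
                ((1 - t) * T₀ + t * T₁ - 1) - (T₁ - T₀)) * hexp
            | linear_combination (L * ((1 - t) * T₀ + t * T₁ - 2)) * hexp
        rw [hgoal]
        apply matderiv_fin_two
        intro i j
        have hd1 : HasDerivWithinAt (fun t : ℝ => (1 - t) * T₀ + t * T₁) (T₁ - T₀)
            (Icc (0 : ℝ) 1) t := by
          have h' : HasDerivAt (fun t : ℝ => (1 - t) * T₀ + t * T₁) ((-1) * T₀ + 1 * T₁) t :=
            (((hasDerivAt_id t).const_sub 1).mul_const T₀).add
              ((hasDerivAt_id t).mul_const T₁)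
          have : ((-1 : ℝ)) * T₀ + 1 * T₁ = T₁ - T₀ := by ring
          exact (this ▸ h').hasDerivWithinAt
        have hdL : HasDerivAt (fun t : ℝ => L * t) L t := by
          simpa using (hasDerivAt_id t).const_mul L
        have hd2 : HasDerivWithinAt (fun t : ℝ => Real.exp (L * t)) (L * Real.exp (L * t))
            (Icc (0 : ℝ) 1) t := by
          have h' := hdL.exp
          rw [mul_comm] at h'
          exact h'.hasDerivWithinAt
        have hd3 : HasDerivWithinAt (fun t : ℝ => Real.exp (-(L * t)))
            (-L * Real.exp (-(L * t))) (Icc (0 : ℝ) 1) t := by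
          have h' := hdL.neg.exp
          have e : Real.exp (-(L * t)) * (-L) = -L * Real.exp (-(L * t)) := by ring
          simp only [Pi.neg_apply] at h'
          rw [e] at h'
          exact h'.hasDerivWithinAt
        fin_cases i <;> fin_cases j
        · simpa using hd1.sub_const 1
        · have h' := (hd1.sub_const 2).mul hd3
          have e : (T₁ - T₀) * Real.exp (-(L * t)) +
              ((1 - t) * T₀ + t * T₁ - 2) * (-L * Real.exp (-(L * t))) =
              ((T₁ - T₀) - L * ((1 - t) * T₀ + t * T₁ - 2)) * Real.exp (-(L * t)) := by ring
          rw [e] at h'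
          exact h'
        · simpa using hd2
        · simpa using hasDerivWithinAt_const t (Icc (0 : ℝ) 1) (1 : ℝ)
  · intro t ht
    have := hfm t ht
    simp only [Matrix.trace_fin_two_of]
    linarith
  · rcases lt_or_gt_of_ne hne with h | h
    · left
      intro x hx y hy hxy
      simp only [Matrix.trace_fin_two_of]
      nlinarith
    · right
      intro x hx y hy hxy
      simp only [Matrix.trace_fin_two_of]
      nlinarith
  · simp [Matrix.trace_fin_two_of]
  · simp [Matrix.trace_fin_two_of]

theorem stmt4 (α β : ℝ) (hα : 1 < α) (hβ : 1 < β) (hab : α ≠ β) :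
    ∃ A : ℝ → Matrix (Fin 2) (Fin 2) ℝ, IsPosPath2 (Icc (0 : ℝ) 1) A ∧
      (∀ t ∈ Icc (0 : ℝ) 1, 2 < (A t).trace) ∧
      (StrictMonoOn (fun t => (A t).trace) (Icc (0 : ℝ) 1) ∨
        StrictAntiOn (fun t => (A t).trace) (Icc (0 : ℝ) 1)) ∧
      (A 0).trace = α + α⁻¹ ∧ (A 1).trace = β + β⁻¹ := by
  have ha0 : (0 : ℝ) < α := lt_trans one_pos hα
  have hb0 : (0 : ℝ) < β := lt_trans one_pos hβ
  have e1 : α * α⁻¹ = 1 := mul_inv_cancel₀ ha0.ne'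
  have e2 : β * β⁻¹ = 1 := mul_inv_cancel₀ hb0.ne'
  have h0 : 2 < α + α⁻¹ := by nlinarith [sq_nonneg (α - 1)]
  have h1 : 2 < β + β⁻¹ := by nlinarith [sq_nonneg (β - 1)]
  have hne : α + α⁻¹ ≠ β + β⁻¹ := by
    intro h
    have hz : (α - β) * (α * β - 1) = 0 := by
      linear_combination (α * β) * h - β * e1 + α * e2
    rcases mul_eq_zero.1 hz with h' | h'
    · exact hab (by linarith)
    · nlinarith
  exact stmt4_aux (α + α⁻¹) (β + β⁻¹) h0 h1 hne
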